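/- Every rotation of ℝ⁴ arises from a quaternion pair: for every linear isometry R of ℍ ≅ ℝ⁴ whose matrix with respect to the basis {1, i, j, k} has determinant 1, there exist unit quaternions q_L and q_R such that R(v) = q_L * v * conj(q_R) for all quaternions v. Hence the pair (q_L, q_R), unique up to simultaneous sign change, parameterizes all of SO(4) (the isoclinic decomposition). -/

import Mathlib

open Quaternion

namespace IsoSO4

noncomputable abbrev B : Module.Basis (Fin 4) ℝ (Quaternion ℝ) := QuaternionAlgebra.basisOneIJK (-1) 0 (-1)

def qi : Quaternion ℝ := ⟨0,1,0,0⟩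
def qj : Quaternion ℝ := ⟨0,0,1,0⟩
def qk : Quaternion ℝ := ⟨0,0,0,1⟩
def qmk (a b c d : ℝ) : Quaternion ℝ := ⟨a,b,c,d⟩
@[simp] lemma qmk_re (a b c d : ℝ) : (qmk a b c d).re = a := rfl
@[simp] lemma qmk_imI (a b c d : ℝ) : (qmk a b c d).imI = b := rfl
@[simp] lemma qmk_imJ (a b c d : ℝ) : (qmk a b c d).imJ = c := rfl
@[simp] lemma qmk_imK (a b c d : ℝ) : (qmk a b c d).imK = d := rfl
@[simp] lemma mk_eq_qmk (a b c d : ℝ) : (⟨a,b,c,d⟩ : Quaternion ℝ) = qmk a b c d := rfl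

@[simp] lemma qi_re : qi.re = 0 := rfl
@[simp] lemma qi_imI : qi.imI = 1 := rfl
@[simp] lemma qi_imJ : qi.imJ = 0 := rfl
@[simp] lemma qi_imK : qi.imK = 0 := rfl
@[simp] lemma qj_re : qj.re = 0 := rfl
@[simp] lemma qj_imI : qj.imI = 0 := rfl
@[simp] lemma qj_imJ : qj.imJ = 1 := rfl
@[simp] lemma qj_imK : qj.imK = 0 := rfl
@[simp] lemma qk_re : qk.re = 0 := rfl
@[simp] lemma qk_imI : qk.imI = 0 := rfl
@[simp] lemma qk_imJ : qk.imJ = 0 := rfl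
@[simp] lemma qk_imK : qk.imK = 1 := rfl

lemma Bval (i : Fin 4) (x : Quaternion ℝ)
    (h : ∀ j, (![x.re, x.imI, x.imJ, x.imK] : Fin 4 → ℝ) j = (Finsupp.single i (1:ℝ)) j) :
    B i = x := by
  symm; apply B.repr.injective
  rw [Module.Basis.repr_self]
  exact Finsupp.ext h

lemma B0 : B 0 = 1 := by apply Bval; intro j; fin_cases j <;> simp
lemma B1 : B 1 = qi := by apply Bval; intro j; fin_cases j <;> simp [Finsupp.single_apply]
lemma B2 : B 2 = qj := by apply Bval; intro j; fin_cases j <;> simp [Finsupp.single_apply]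
lemma B3 : B 3 = qk := by apply Bval; intro j; fin_cases j <;> simp [Finsupp.single_apply]

lemma entry (f : Quaternion ℝ →ₗ[ℝ] Quaternion ℝ) (i j : Fin 4) :
    (LinearMap.toMatrix B B f) i j
      = ![(f (B j)).re, (f (B j)).imI, (f (B j)).imJ, (f (B j)).imK] i := by
  rw [LinearMap.toMatrix_apply]; rfl

lemma quatMatrix (f : Quaternion ℝ →ₗ[ℝ] Quaternion ℝ) :
    LinearMap.toMatrix B B f =
      !![(f 1).re, (f qi).re, (f qj).re, (f qk).re;
         (f 1).imI, (f qi).imI, (f qj).imI, (f qk).imI;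
         (f 1).imJ, (f qi).imJ, (f qj).imJ, (f qk).imJ;
         (f 1).imK, (f qi).imK, (f qj).imK, (f qk).imK] := by
  ext i j
  rw [entry]
  fin_cases i <;> fin_cases j <;> simp [B0, B1, B2, B3]

lemma det_helper (c s al be : ℝ) :
    (!![1,0,0,0; 0,1,0,0; 0,0,c,al; 0,0,s,be]).det = c*be - s*al := by
  simp [Matrix.det_succ_row_zero, Fin.sum_univ_succ]
  ring

lemma quatDet (f : Quaternion ℝ →ₗ[ℝ] Quaternion ℝ)
    (h1 : f 1 = 1) (hi : f qi = qi)
    (hj : f qj = ⟨0,0,(f qj).imJ,(f qj).imK⟩) (hk : f qk = ⟨0,0,(f qk).imJ,(f qk).imK⟩) :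
    LinearMap.det f = (f qj).imJ * (f qk).imK - (f qj).imK * (f qk).imJ := by
  rw [← LinearMap.det_toMatrix B, quatMatrix]
  rw [show (f 1).re = 1 by rw [h1]; rfl, show (f 1).imI = 0 by rw [h1]; rfl,
      show (f 1).imJ = 0 by rw [h1]; rfl, show (f 1).imK = 0 by rw [h1]; rfl,
      show (f qi).re = 0 by rw [hi]; simp, show (f qi).imI = 1 by rw [hi]; simp,
      show (f qi).imJ = 0 by rw [hi]; simp, show (f qi).imK = 0 by rw [hi]; simp,
      show (f qj).re = 0 by rw [hj], show (f qj).imI = 0 by rw [hj],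
      show (f qk).re = 0 by rw [hk], show (f qk).imI = 0 by rw [hk]]
  exact det_helper _ _ _ _

@[simp] lemma finsucc2 : (Fin.succ 2 : Fin 4) = 3 := by decide
@[simp] lemma fincastsucc2 : (Fin.castSucc 2 : Fin 4) = 2 := by decide
@[simp] lemma finsA12 : (Fin.succAbove (1 : Fin 4) 2) = 3 := by decide
@[simp] lemma finsA22 : (Fin.succAbove (2 : Fin 4) 2) = 3 := by decide
@[simp] lemma finsA32 : (Fin.succAbove (3 : Fin 4) 2) = 2 := by decide

lemma det4 (m : Matrix (Fin 4) (Fin 4) ℝ) :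
    m.det =
      m 0 0 * (m 1 1 * (m 2 2 * m 3 3 - m 2 3 * m 3 2)
        - m 1 2 * (m 2 1 * m 3 3 - m 2 3 * m 3 1)
        + m 1 3 * (m 2 1 * m 3 2 - m 2 2 * m 3 1))
      - m 0 1 * (m 1 0 * (m 2 2 * m 3 3 - m 2 3 * m 3 2)
        - m 1 2 * (m 2 0 * m 3 3 - m 2 3 * m 3 0)
        + m 1 3 * (m 2 0 * m 3 2 - m 2 2 * m 3 0))
      + m 0 2 * (m 1 0 * (m 2 1 * m 3 3 - m 2 3 * m 3 1)
        - m 1 1 * (m 2 0 * m 3 3 - m 2 3 * m 3 0)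
        + m 1 3 * (m 2 0 * m 3 1 - m 2 1 * m 3 0))
      - m 0 3 * (m 1 0 * (m 2 1 * m 3 2 - m 2 2 * m 3 1)
        - m 1 1 * (m 2 0 * m 3 2 - m 2 2 * m 3 0)
        + m 1 2 * (m 2 0 * m 3 1 - m 2 1 * m 3 0)) := by
  simp [Matrix.det_succ_row_zero, Fin.sum_univ_succ]
  ring

lemma det_mulLeft (q : Quaternion ℝ) :
    LinearMap.det (LinearMap.mulLeft ℝ q) = normSq q ^ 2 := by
  rw [← LinearMap.det_toMatrix B, quatMatrix, det4]
  simp [Quaternion.re_mul, Quaternion.imI_mul, Quaternion.imJ_mul, Quaternion.imK_mul,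
    Quaternion.normSq_def', qi, qj, qk]
  ring

lemma det_mulRight (q : Quaternion ℝ) :
    LinearMap.det (LinearMap.mulRight ℝ q) = normSq q ^ 2 := by
  rw [← LinearMap.det_toMatrix B, quatMatrix, det4]
  simp [Quaternion.re_mul, Quaternion.imI_mul, Quaternion.imJ_mul, Quaternion.imK_mul,
    Quaternion.normSq_def', qi, qj, qk]
  ring

lemma inner_quat (x y : Quaternion ℝ) :
    (inner ℝ x y : ℝ) = x.re*y.re + x.imI*y.imI + x.imJ*y.imJ + x.imK*y.imK := by
  rw [Quaternion.inner_def, Quaternion.re_mul]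
  simp

lemma normSq_one_of_norm {x : Quaternion ℝ} (h : ‖x‖ = 1) : normSq x = 1 := by
  rw [Quaternion.normSq_eq_norm_mul_self, h]; norm_num

lemma norm_one_of_normSq {x : Quaternion ℝ} (h : normSq x = 1) : ‖x‖ = 1 := by
  have h2 : ‖x‖ * ‖x‖ = 1 := by rw [← Quaternion.normSq_eq_norm_mul_self, h]
  nlinarith [norm_nonneg x]

lemma mul_star_of_unit {x : Quaternion ℝ} (h : ‖x‖ = 1) : x * star x = 1 := by
  have h' := normSq_one_of_norm h
  rw [Quaternion.normSq_def'] at h'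
  ext <;> simp [Quaternion.re_mul, Quaternion.imI_mul, Quaternion.imJ_mul, Quaternion.imK_mul] <;>
    nlinarith [h']

lemma star_mul_of_unit {x : Quaternion ℝ} (h : ‖x‖ = 1) : star x * x = 1 := by
  have := mul_star_of_unit (x := star x) (by rwa [Quaternion.norm_star])
  rwa [star_star] at this

lemma unit_ne_zero {x : Quaternion ℝ} (h : ‖x‖ = 1) : x ≠ 0 := by
  intro h0; rw [h0, norm_zero] at h; norm_num at h

lemma norm_qi : ‖qi‖ = 1 := norm_one_of_normSq (by rw [Quaternion.normSq_def']; simp)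
lemma norm_qj : ‖qj‖ = 1 := norm_one_of_normSq (by rw [Quaternion.normSq_def']; simp)
lemma norm_qk : ‖qk‖ = 1 := norm_one_of_normSq (by rw [Quaternion.normSq_def']; simp)

lemma quat_decomp (v : Quaternion ℝ) :
    v = v.re • 1 + v.imI • qi + v.imJ • qj + v.imK • qk := by
  ext <;> simp [qi, qj, qk, Quaternion.re_smul]

lemma qi_mul_qi : qi * qi = -1 := by
  ext <;> simp [qi, Quaternion.re_mul, Quaternion.imI_mul, Quaternion.imJ_mul,
    Quaternion.imK_mul]

lemma uniqueness {qL qR pL pR : Quaternion ℝ} (hqL : ‖qL‖ = 1) (hqR : ‖qR‖ = 1)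
    (hpL : ‖pL‖ = 1) (hpR : ‖pR‖ = 1)
    (h : ∀ v : Quaternion ℝ, pL * v * star pR = qL * v * star qR) :
    (pL = qL ∧ pR = qR) ∨ (pL = -qL ∧ pR = -qR) := by
  set c0 : Quaternion ℝ := star qL * pL with hc0
  set d0 : Quaternion ℝ := star pR * qR with hd0
  have hcv : ∀ v : Quaternion ℝ, c0 * v * d0 = v := by
    intro v
    calc c0 * v * d0 = star qL * (pL * v * star pR) * qR := by rw [hc0, hd0]; noncomm_ring
    _ = star qL * (qL * v * star qR) * qR := by rw [h v]
    _ = (star qL * qL) * v * (star qR * qR) := by noncomm_ring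
    _ = v := by rw [star_mul_of_unit hqL, star_mul_of_unit hqR, one_mul, mul_one]
  have hcd : c0 * d0 = 1 := by simpa using hcv 1
  have hc0ne : c0 ≠ 0 := by
    intro h0; rw [h0, zero_mul] at hcd; exact zero_ne_one hcd
  have hd0c : d0 = c0⁻¹ := (inv_eq_of_mul_eq_one_right hcd).symm
  have hcomm : ∀ v : Quaternion ℝ, c0 * v = v * c0 := by
    intro v
    have h1 := hcv v
    rw [hd0c] at h1
    have h2 := congrArg (fun z => z * c0) h1
    rwa [mul_assoc (c0 * v), inv_mul_cancel₀ hc0ne, mul_one] at h2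
  have hK : c0.imK = 0 := by
    have h1 := congrArg (fun z : Quaternion ℝ => z.imJ) (hcomm qi)
    simp [qi, Quaternion.imJ_mul] at h1
    linarith
  have hJ : c0.imJ = 0 := by
    have h1 := congrArg (fun z : Quaternion ℝ => z.imK) (hcomm qi)
    simp [qi, Quaternion.imK_mul] at h1
    linarith
  have hI : c0.imI = 0 := by
    have h1 := congrArg (fun z : Quaternion ℝ => z.imK) (hcomm qj)
    simp [qj, Quaternion.imK_mul] at h1
    linarith
  have hnc : normSq c0 = 1 := normSq_one_of_norm (by
    rw [hc0, norm_mul, Quaternion.norm_star, hqL, hpL]; norm_num)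
  have hre : c0.re * c0.re = 1 := by
    rw [Quaternion.normSq_def'] at hnc
    nlinarith [hI, hJ, hK]
  have hpLval : pL = qL * c0 := by
    rw [hc0, ← mul_assoc, mul_star_of_unit hqL, one_mul]
  have hqRval : qR = pR * d0 := by
    rw [hd0, ← mul_assoc, mul_star_of_unit hpR, one_mul]
  rcases mul_self_eq_one_iff.mp hre with hr | hr
  · have hc1 : c0 = 1 := by ext <;> simp [hr, hI, hJ, hK]
    left
    constructor
    · rw [hpLval, hc1, mul_one]
    · have hd1 : d0 = 1 := by rw [hd0c, hc1, inv_one]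
      rw [hqRval, hd1, mul_one]
  · have hc1 : c0 = -1 := by ext <;> simp [hr, hI, hJ, hK]
    right
    constructor
    · rw [hpLval, hc1, mul_neg_one]
    · have hd1 : d0 = -1 := by rw [hd0c, hc1, inv_neg_one]
      have h9 : qR = -pR := by rw [hqRval, hd1, mul_neg_one]
      rw [h9, neg_neg]

end IsoSO4


set_option maxHeartbeats 2000000 in
set_option maxRecDepth 4000 in
open IsoSO4 in
/-- Every rotation of `ℝ⁴ ≅ ℍ` arises from a quaternion pair:
for every linear isometry `R` of `ℍ` whose matrix with respect to the basis
`{1, i, j, k}` has determinant 1, there exist unit quaternions `q_L`, `q_R`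
with `R(v) = q_L * v * conj(q_R)` for all `v`; the pair is unique up to
simultaneous sign change (the isoclinic decomposition of `SO(4)`). -/
theorem isoquant_so4_surjectivity
    (R : Quaternion ℝ ≃ₗᵢ[ℝ] Quaternion ℝ)
    (hdet : (LinearMap.toMatrix
        (QuaternionAlgebra.basisOneIJK (-1 : ℝ) 0 (-1))
        (QuaternionAlgebra.basisOneIJK (-1 : ℝ) 0 (-1))
        R.toLinearEquiv.toLinearMap).det = 1) :
    ∃ qL qR : Quaternion ℝ, ‖qL‖ = 1 ∧ ‖qR‖ = 1 ∧
      (∀ v : Quaternion ℝ, R v = qL * v * star qR) ∧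
      (∀ pL pR : Quaternion ℝ, ‖pL‖ = 1 → ‖pR‖ = 1 →
        (∀ v : Quaternion ℝ, R v = pL * v * star pR) →
        (pL = qL ∧ pR = qR) ∨ (pL = -qL ∧ pR = -qR)) := by
  classical
  have hdetR : LinearMap.det (R.toLinearEquiv : Quaternion ℝ →ₗ[ℝ] Quaternion ℝ) = 1 :=
    (LinearMap.det_toMatrix (QuaternionAlgebra.basisOneIJK (-1 : ℝ) 0 (-1)) _).symm.trans hdet
  set q : Quaternion ℝ := R 1 with hq_def
  have hq : ‖q‖ = 1 := by rw [hq_def, R.norm_map, norm_one]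
  -- stage 1 isometry
  obtain ⟨W, hWapp⟩ : ∃ W : Quaternion ℝ →ₗᵢ[ℝ] Quaternion ℝ,
      ∀ v, W v = star q * R v := by
    refine ⟨⟨(LinearMap.mulLeft ℝ (star q)) ∘ₗ
      (R.toLinearEquiv : Quaternion ℝ →ₗ[ℝ] Quaternion ℝ), fun v => by
        simp [norm_mul, Quaternion.norm_star, hq, R.norm_map]⟩, fun v => rfl⟩
  have hW1 : W 1 = 1 := by rw [hWapp, ← hq_def]; exact star_mul_of_unit hq
  set u : Quaternion ℝ := W qi with hu_def
  have hu : ‖u‖ = 1 := by rw [hu_def, W.norm_map, norm_qi]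
  have hure : u.re = 0 := by
    have h := W.inner_map_map qi 1
    rw [hW1, ← hu_def, inner_quat, inner_quat] at h
    simpa [qi] using h
  have hu2 : u.imI * u.imI + u.imJ * u.imJ + u.imK * u.imK = 1 := by
    have h := normSq_one_of_norm hu
    rw [Quaternion.normSq_def'] at h
    nlinarith [hure]
  -- construct a with a * qi = u * a
  obtain ⟨a, ha, haq⟩ : ∃ a : Quaternion ℝ, ‖a‖ = 1 ∧ a * qi = u * a := by
    by_cases hcrit : u.imI = -1
    · refine ⟨qj, norm_qj, ?_⟩
      have hJ : u.imJ = 0 := by nlinarith [sq_nonneg u.imJ, sq_nonneg u.imK]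
      have hK : u.imK = 0 := by nlinarith [sq_nonneg u.imJ, sq_nonneg u.imK]
      have huval : u = -qi := by ext <;> simp [hure, hcrit, hJ, hK, qi]
      rw [huval]
      ext <;> simp [qi, qj, Quaternion.re_mul, Quaternion.imI_mul, Quaternion.imJ_mul,
        Quaternion.imK_mul]
    · set p : Quaternion ℝ := 1 - u * qi with hp_def
      have hpre : p.re = 1 + u.imI := by
        simp [hp_def, Quaternion.re_mul, hure, qi]
      have hpne : p ≠ 0 := by
        intro h0
        rw [h0] at hpre
        simp at hpre
        exact hcrit (by linarith)
      have huu : u * u = -1 := by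
        ext <;> simp [Quaternion.re_mul, Quaternion.imI_mul, Quaternion.imJ_mul,
          Quaternion.imK_mul, hure] <;> nlinarith [hu2]
      have hpi : p * qi = u * p := by
        have e1 : p * qi = qi - u * (qi * qi) := by rw [hp_def]; noncomm_ring
        have e2 : u * p = u - (u * u) * qi := by rw [hp_def]; noncomm_ring
        rw [e1, e2, qi_mul_qi, huu]
        noncomm_ring
      refine ⟨‖p‖⁻¹ • p, ?_, ?_⟩
      · rw [norm_smul]
        simp [norm_ne_zero_iff.mpr hpne, inv_mul_cancel₀ (norm_ne_zero_iff.mpr hpne)]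
      · rw [smul_mul_assoc, mul_smul_comm, hpi]
  -- stage 2 isometry
  obtain ⟨M, hMapp, hdetM⟩ : ∃ M : Quaternion ℝ →ₗᵢ[ℝ] Quaternion ℝ,
      (∀ v, M v = ((star a * star q) * R v) * a) ∧ LinearMap.det M.toLinearMap = 1 := by
    refine ⟨⟨(LinearMap.mulRight ℝ a) ∘ₗ
      ((LinearMap.mulLeft ℝ (star a * star q)) ∘ₗ
        (R.toLinearEquiv : Quaternion ℝ →ₗ[ℝ] Quaternion ℝ)), fun v => by
        simp [norm_mul, Quaternion.norm_star, hq, ha, R.norm_map]⟩, fun v => rfl, ?_⟩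
    show LinearMap.det ((LinearMap.mulRight ℝ a) ∘ₗ
      ((LinearMap.mulLeft ℝ (star a * star q)) ∘ₗ
        (R.toLinearEquiv : Quaternion ℝ →ₗ[ℝ] Quaternion ℝ))) = 1
    rw [LinearMap.det_comp, LinearMap.det_comp, det_mulRight, det_mulLeft, hdetR]
    have hna : normSq a = 1 := normSq_one_of_norm ha
    have hnq : normSq (star a * star q) = 1 := normSq_one_of_norm (by
      rw [norm_mul, Quaternion.norm_star, Quaternion.norm_star, ha, hq]; norm_num)
    rw [hna, hnq]
    norm_num
  have hsa : star a * a = 1 := star_mul_of_unit ha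
  have has : a * star a = 1 := mul_star_of_unit ha
  have hsq : star q * q = 1 := star_mul_of_unit hq
  have hqs : q * star q = 1 := mul_star_of_unit hq
  have hM1 : M 1 = 1 := by
    rw [hMapp, ← hq_def]
    calc ((star a * star q) * q) * a = star a * (star q * q) * a := by noncomm_ring
    _ = 1 := by rw [hsq, mul_one, hsa]
  have hMi : M qi = qi := by
    rw [hMapp]
    calc ((star a * star q) * R qi) * a = star a * ((star q * R qi) * a) := by noncomm_ring
    _ = star a * (u * a) := by rw [hu_def, hWapp]
    _ = star a * (a * qi) := by rw [← haq]
    _ = (star a * a) * qi := by noncomm_ring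
    _ = qi := by rw [hsa, one_mul]
  set c : ℝ := (M qj).imJ with hc_def
  set s : ℝ := (M qj).imK with hs_def
  set al : ℝ := (M qk).imJ with hal_def
  set be : ℝ := (M qk).imK with hbe_def
  have hjre : (M qj).re = 0 := by
    have h := M.inner_map_map qj 1
    rw [hM1, inner_quat, inner_quat] at h
    simpa [qj] using h
  have hjim : (M qj).imI = 0 := by
    have h := M.inner_map_map qj qi
    rw [hMi, inner_quat, inner_quat] at h
    simpa [qi, qj] using h
  have hkre : (M qk).re = 0 := by
    have h := M.inner_map_map qk 1
    rw [hM1, inner_quat, inner_quat] at h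
    simpa [qk] using h
  have hkim : (M qk).imI = 0 := by
    have h := M.inner_map_map qk qi
    rw [hMi, inner_quat, inner_quat] at h
    simpa [qi, qk] using h
  have hcs : c * c + s * s = 1 := by
    have h := M.inner_map_map qj qj
    rw [inner_quat, inner_quat] at h
    rw [hjre, hjim] at h
    simpa [← hc_def, ← hs_def] using h
  have hab : al * al + be * be = 1 := by
    have h := M.inner_map_map qk qk
    rw [inner_quat, inner_quat] at h
    rw [hkre, hkim] at h
    simpa [← hal_def, ← hbe_def] using h
  have horth : c * al + s * be = 0 := by
    have h := M.inner_map_map qj qk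
    rw [inner_quat, inner_quat] at h
    rw [hjre, hjim, hkre, hkim] at h
    simpa [← hc_def, ← hs_def, ← hal_def, ← hbe_def] using h
  have hMj : M qj = ⟨0, 0, c, s⟩ := by
    ext
    · exact hjre
    · exact hjim
    · rfl
    · rfl
  have hMk : M qk = ⟨0, 0, al, be⟩ := by
    ext
    · exact hkre
    · exact hkim
    · rfl
    · rfl
  have hdet2 : c * be - s * al = 1 := by
    have h := quatDet M.toLinearMap hM1 hMi (by rw [show M.toLinearMap qj = M qj from rfl, hMj])
      (by rw [show M.toLinearMap qk = M qk from rfl, hMk])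
    rw [hdetM] at h
    exact h.symm
  have hal' : al = -s := by linear_combination c * horth - s * hdet2 - al * hcs
  have hbe' : be = c := by linear_combination s * horth + c * hdet2 - be * hcs
  -- construct b
  obtain ⟨b, hb, hbi, hbj, hbk⟩ : ∃ b : Quaternion ℝ, ‖b‖ = 1 ∧
      b * qi * star b = qi ∧ b * qj * star b = ⟨0,0,c,s⟩ ∧ b * qk * star b = ⟨0,0,-s,c⟩ := by
    by_cases hc1 : c = -1
    · have hs0 : s = 0 := by nlinarith [hcs]
      refine ⟨qi, norm_qi, ?_, ?_, ?_⟩ <;>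
        ext <;>
        simp [qi, qj, qk, hc1, hs0, Quaternion.re_mul, Quaternion.imI_mul,
          Quaternion.imJ_mul, Quaternion.imK_mul]
    · have hcge : -1 < c := by
        rcases lt_or_eq_of_le (show -1 ≤ c by nlinarith [hcs]) with h | h
        · exact h
        · exact absurd h.symm hc1
      obtain ⟨x, hxpos, hx2⟩ : ∃ x : ℝ, 0 < x ∧ x * x = (1 + c) / 2 :=
        ⟨Real.sqrt ((1 + c) / 2), Real.sqrt_pos.mpr (by linarith),
          Real.mul_self_sqrt (by linarith)⟩
      obtain ⟨y, hxy, hy2⟩ : ∃ y : ℝ, 2 * (x * y) = s ∧ y * y = (1 - c) / 2 := by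
        refine ⟨s / (2 * x), ?_, ?_⟩
        · field_simp
          try ring
        · rw [div_mul_div_comm, show (2*x)*(2*x) = 4 * (x*x) by ring, hx2,
            show (4:ℝ) * ((1+c)/2) = 2*(1+c) by ring,
            div_eq_iff (by linarith : (2:ℝ)*(1+c) ≠ 0)]
          nlinarith [hcs]
      refine ⟨qmk x y 0 0, ?_, ?_, ?_, ?_⟩
      · apply norm_one_of_normSq
        rw [Quaternion.normSq_def']
        show x^2 + y^2 + 0^2 + 0^2 = 1
        have e1 : x^2 = (1 + c)/2 := by rw [sq]; exact hx2
        have e2 : y^2 = (1 - c)/2 := by rw [sq]; exact hy2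
        rw [e1, e2]; ring
      · ext <;> simp [qi, Quaternion.re_mul, Quaternion.imI_mul, Quaternion.imJ_mul,
          Quaternion.imK_mul] <;>
          first
          | ring1
          | linear_combination hx2 + hy2
          | linear_combination hx2 - hy2
          | linear_combination hxy
          | linear_combination -hxy
          | linear_combination hy2 - hx2
      · ext <;> simp [qj, Quaternion.re_mul, Quaternion.imI_mul, Quaternion.imJ_mul,
          Quaternion.imK_mul] <;>
          first
          | ring1
          | linear_combination hx2 + hy2
          | linear_combination hx2 - hy2
          | linear_combination hxy
          | linear_combination -hxy
          | linear_combination hy2 - hx2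
      · ext <;> simp [qk, Quaternion.re_mul, Quaternion.imI_mul, Quaternion.imJ_mul,
          Quaternion.imK_mul] <;>
          first
          | ring1
          | linear_combination hx2 + hy2
          | linear_combination hx2 - hy2
          | linear_combination hxy
          | linear_combination -hxy
          | linear_combination hy2 - hx2
  have hbs : b * star b = 1 := mul_star_of_unit hb
  -- M v = b * v * star b
  have hMv : ∀ v : Quaternion ℝ, M v = b * v * star b := by
    intro v
    have hlhs : M v = v.re • (1:Quaternion ℝ) + v.imI • qi + v.imJ • M qj + v.imK • M qk := by
      conv_lhs => rw [quat_decomp v]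
      rw [M.map_add, M.map_add, M.map_add, M.map_smul, M.map_smul, M.map_smul, M.map_smul,
        hM1, hMi]
    have hrhs : b * v * star b
        = v.re • (b * 1 * star b) + v.imI • (b * qi * star b)
          + v.imJ • (b * qj * star b) + v.imK • (b * qk * star b) := by
      conv_lhs => rw [quat_decomp v]
      simp only [mul_add, add_mul, smul_mul_assoc, mul_smul_comm]
    rw [hlhs, hrhs, mul_one, hbs, hbi, hbj, hbk, hMj, hMk, hal', hbe']
  -- assemble
  have hqLn : ‖q * a * b‖ = 1 := by rw [norm_mul, norm_mul, hq, ha, hb]; norm_num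
  have hqRn : ‖a * b‖ = 1 := by rw [norm_mul, ha, hb]; norm_num
  have hmain : ∀ v : Quaternion ℝ, R v = (q * a * b) * v * star (a * b) := by
    intro v
    have h0 : ((star a * star q) * R v) * a = b * v * star b := by
      rw [← hMapp, hMv]
    have key : ((star a * star q) * ((q * a * b) * v * star (a * b))) * a
        = b * v * star b := by
      rw [star_mul]
      calc ((star a * star q) * ((q * a * b) * v * (star b * star a))) * a
          = (star a * ((star q * q) * (a * b))) * v * (star b * (star a * a)) := by
            noncomm_ring
        _ = (star a * (a * b)) * v * star b := by rw [hsq, hsa]; simp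
        _ = ((star a * a) * b) * v * star b := by noncomm_ring
        _ = b * v * star b := by rw [hsa, one_mul]
    have e : ((star a * star q) * R v) * a
        = ((star a * star q) * ((q * a * b) * v * star (a * b))) * a := by
      rw [h0]; exact key.symm
    have hne1 : (star a * star q) ≠ 0 := unit_ne_zero (by
      rw [norm_mul, Quaternion.norm_star, Quaternion.norm_star, ha, hq]; norm_num)
    exact mul_left_cancel₀ hne1 (mul_right_cancel₀ (unit_ne_zero ha) e)
  refine ⟨q * a * b, a * b, hqLn, hqRn, hmain, ?_⟩
  intro pL pR hpL hpR hpv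
  exact uniqueness hqLn hqRn hpL hpR (fun v => (hpv v).symm.trans (hmain v))
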